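/- Define R(α,n,λ) = (α λ^α sin(απ)/π) · ∫₀¹ t^{α−1}(1−t)^{αn} [ 1/|t^α − λ^α e^{−iαπ}|² + λ^{αn}/|e^{−iαπ} − (λt)^α|² ] dt. Then for α ∈ (0,1), n ≥ 1, and λ ∈ (0,1], one has 0 < R(α,n,λ) < 1 − α < 1. -/

import Mathlib

open MeasureTheory Set Real intervalIntegral

/-- Continuity of the basic integrand on `(0,1]`. -/
lemma auxR_cont (p k e d : ℝ) (hp : 0 < p) (hd : 0 < d) :
    ContinuousOn (fun t : ℝ => t ^ (p - 1) / ((k * t ^ p - e) ^ 2 + d ^ 2)) (Set.Ioc 0 1) := by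
  intro t ht
  have ht0 : t ≠ 0 := ne_of_gt ht.1
  have hden : ((k * t ^ p - e) ^ 2 + d ^ 2) ≠ 0 := by positivity
  refine ContinuousAt.continuousWithinAt ?_
  exact (Real.continuousAt_rpow_const t _ (Or.inl ht0)).div
    (((((Real.continuous_rpow_const hp.le).continuousAt).const_mul k).sub
      continuousAt_const).pow 2 |>.add continuousAt_const) hden

/-- Integrability of the basic integrand on `[0,1]`. -/
lemma auxR_integrable (p k e d : ℝ) (hp : 0 < p) (hd : 0 < d) :
    IntervalIntegrable (fun t : ℝ => t ^ (p - 1) / ((k * t ^ p - e) ^ 2 + d ^ 2))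
      MeasureTheory.volume 0 1 := by
  apply IntervalIntegrable.mono_fun'
    (g := fun t : ℝ => t ^ (p - 1) / d ^ 2)
  · exact (intervalIntegrable_rpow' (by linarith)).div_const _
  · rw [Set.uIoc_of_le (zero_le_one)]
    exact ((auxR_cont p k e d hp hd).aestronglyMeasurable measurableSet_Ioc)
  · rw [Set.uIoc_of_le (zero_le_one)]
    filter_upwards [MeasureTheory.ae_restrict_mem measurableSet_Ioc] with t ht
    have h0 : (0:ℝ) ≤ t ^ (p - 1) := Real.rpow_nonneg ht.1.le _
    have hden : (0:ℝ) < (k * t ^ p - e) ^ 2 + d ^ 2 := by positivity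
    rw [Real.norm_eq_abs, abs_of_nonneg (by positivity)]
    gcongr
    nlinarith [sq_nonneg (k * t ^ p - e)]

/-- FTC evaluation of the basic integral. -/
lemma auxR_ftc (p k e d : ℝ) (hp : 0 < p) (hk : 0 < k) (hd : 0 < d) :
    ∫ t in (0:ℝ)..1, t ^ (p - 1) / ((k * t ^ p - e) ^ 2 + d ^ 2)
      = (Real.arctan ((k - e) / d) - Real.arctan (-e / d)) / (p * k * d) := by
  have h := intervalIntegral.integral_eq_sub_of_hasDeriv_right_of_le (a := 0) (b := 1)
    (f := fun t => Real.arctan ((k * t ^ p - e) / d) / (p * k * d))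
    (f' := fun t => t ^ (p - 1) / ((k * t ^ p - e) ^ 2 + d ^ 2))
    zero_le_one ?_ ?_ (auxR_integrable p k e d hp hd)
  · rw [h]
    simp only [Real.one_rpow, Real.zero_rpow hp.ne', mul_one, mul_zero, zero_sub]
    ring
  · apply Continuous.continuousOn
    exact (Real.continuous_arctan.comp
      (((continuous_const.mul (Real.continuous_rpow_const hp.le)).sub continuous_const).div_const d)).div_const _
  · intro x hx
    apply HasDerivAt.hasDerivWithinAt
    have hx0 : x ≠ 0 := ne_of_gt hx.1
    have h1 : HasDerivAt (fun t : ℝ => t ^ p) (p * x ^ (p - 1)) x :=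
      Real.hasDerivAt_rpow_const (Or.inl hx0)
    have h2 : HasDerivAt (fun t : ℝ => (k * t ^ p - e) / d) (k * (p * x ^ (p - 1)) / d) x :=
      ((h1.const_mul k).sub_const e).div_const d
    have h3 := (Real.hasDerivAt_arctan ((k * x ^ p - e) / d)).comp x h2
    have h4 := h3.div_const (p * k * d)
    refine h4.congr_deriv ?_
    have hden : (0:ℝ) < (k * x ^ p - e) ^ 2 + d ^ 2 := by positivity
    field_simp
    ring

/-- The key arctangent identity. -/
lemma auxR_arctan (θ m : ℝ) (h0 : 0 < θ) (hπ : θ < Real.pi) (hm0 : 0 < m) (hm1 : m ≤ 1) :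
    Real.arctan ((1 - Real.cos θ * m) / (m * Real.sin θ))
      + Real.arctan ((m - Real.cos θ) / Real.sin θ)
      - 2 * Real.arctan (-Real.cos θ / Real.sin θ) = Real.pi - θ := by
  set s := Real.sin θ with hsdef
  set c := Real.cos θ with hcdef
  have hs : 0 < s := Real.sin_pos_of_pos_of_lt_pi h0 hπ
  have hpyth : s ^ 2 + c ^ 2 = 1 := Real.sin_sq_add_cos_sq θ
  have hc1 : c < 1 := by nlinarith
  have hcm : c * m < 1 := by
    rcases le_or_gt c 0 with h | h
    · nlinarith
    · nlinarith
  have hcm' : (0:ℝ) < 1 - c * m := by linarith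
  have h1 : Real.arctan (c / s) = Real.pi / 2 - θ := by
    have htan : c / s = Real.tan (Real.pi / 2 - θ) := by
      rw [Real.tan_pi_div_two_sub, Real.tan_eq_sin_div_cos, inv_div]
    rw [htan, Real.arctan_tan (by linarith) (by linarith)]
  have h2 : Real.arctan ((m - c) / s) + Real.arctan (c / s)
      = Real.arctan (m * s / (1 - c * m)) := by
    have hprod : (m - c) / s * (c / s) < 1 := by
      rw [div_mul_div_comm, div_lt_one (by positivity)]
      nlinarith
    rw [Real.arctan_add hprod]
    congr 1
    have e1 : (m - c) / s + c / s = m / s := by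
      rw [← add_div]; congr 1; ring
    have e2 : 1 - (m - c) / s * (c / s) = (1 - c * m) / s ^ 2 := by
      rw [div_mul_div_comm]
      field_simp
      linear_combination hpyth
    rw [e1, e2]
    field_simp
  have h3 : Real.arctan ((1 - c * m) / (m * s))
      = Real.pi / 2 - Real.arctan (m * s / (1 - c * m)) := by
    rw [← Real.arctan_inv_of_pos (by positivity : (0:ℝ) < m * s / (1 - c * m)), inv_div]
  rw [h1] at h2
  rw [h3, neg_div, Real.arctan_neg, h1]
  linarith

/-- The comparison integrand. -/
noncomputable def auxG (α ν c s m L : ℝ) : ℝ → ℝ := fun t =>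
  t ^ (α - 1) * (1 - t) ^ ν *
    (1 / ((t ^ α - c * m) ^ 2 + (m * s) ^ 2) + L / ((m * t ^ α - c) ^ 2 + s ^ 2))

lemma auxR_lt (α ν c s m L : ℝ) (hα : 0 < α) (hν : 0 < ν) (hs : 0 < s) (hm : 0 < m)
    (hL0 : 0 < L) (hL1 : L ≤ 1) :
    0 < (∫ t in (0:ℝ)..1, auxG α ν c s m L t) ∧
    (∫ t in (0:ℝ)..1, auxG α ν c s m L t)
      < (Real.arctan ((1 - c * m) / (m * s)) - Real.arctan (-(c * m) / (m * s))) / (α * 1 * (m * s))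
        + (Real.arctan ((m - c) / s) - Real.arctan (-c / s)) / (α * m * s) := by
  have hms : 0 < m * s := mul_pos hm hs
  have hint1 := auxR_integrable α 1 (c * m) (m * s) hα hms
  have hint2 := auxR_integrable α m c s hα hs
  have hD1 : ∀ t : ℝ, 0 < (t ^ α - c * m) ^ 2 + (m * s) ^ 2 :=
    fun t => add_pos_of_nonneg_of_pos (sq_nonneg _) (pow_pos hms 2)
  have hD2 : ∀ t : ℝ, 0 < (m * t ^ α - c) ^ 2 + s ^ 2 :=
    fun t => add_pos_of_nonneg_of_pos (sq_nonneg _) (pow_pos hs 2)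
  have hintG : IntervalIntegrable (auxG α ν c s m L) volume 0 1 := by
    apply IntervalIntegrable.mono_fun'
      (g := fun t : ℝ => t ^ (α - 1) * (1 / (m * s) ^ 2 + 1 / s ^ 2))
    · exact (intervalIntegrable_rpow' (by linarith)).mul_const _
    · rw [Set.uIoc_of_le zero_le_one]
      apply ContinuousOn.aestronglyMeasurable _ measurableSet_Ioc
      intro t ht
      refine ContinuousAt.continuousWithinAt ?_
      have hta : ContinuousAt (fun u : ℝ => u ^ α) t :=
        (Real.continuous_rpow_const hα.le).continuousAt
      unfold auxG
      exact ((Real.continuousAt_rpow_const t _ (Or.inl (ne_of_gt ht.1))).mul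
        (((Real.continuous_rpow_const hν.le).comp
          (continuous_const.sub continuous_id)).continuousAt)).mul
        ((continuousAt_const.div (((hta.sub continuousAt_const).pow 2).add continuousAt_const)
            (hD1 t).ne').add
          (continuousAt_const.div
            ((((continuousAt_const.mul hta).sub continuousAt_const).pow 2).add continuousAt_const)
            (hD2 t).ne'))
    · rw [Set.uIoc_of_le zero_le_one]
      filter_upwards [MeasureTheory.ae_restrict_mem measurableSet_Ioc] with t ht
      have ht0 : (0:ℝ) ≤ t := ht.1.le
      have h1t : (0:ℝ) ≤ 1 - t := by linarith [ht.2]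
      have hw1 : (1 - t) ^ ν ≤ 1 := Real.rpow_le_one h1t (by linarith [ht.1]) hν.le
      have hb1 : 1 / ((t ^ α - c * m) ^ 2 + (m * s) ^ 2) ≤ 1 / (m * s) ^ 2 :=
        one_div_le_one_div_of_le (pow_pos hms 2) (le_add_of_nonneg_left (sq_nonneg _))
      have hb2 : L / ((m * t ^ α - c) ^ 2 + s ^ 2) ≤ 1 / s ^ 2 :=
        div_le_div₀ zero_le_one hL1 (pow_pos hs 2) (le_add_of_nonneg_left (sq_nonneg _))
      have hsum0 : 0 ≤ 1 / ((t ^ α - c * m) ^ 2 + (m * s) ^ 2)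
          + L / ((m * t ^ α - c) ^ 2 + s ^ 2) :=
        add_nonneg (le_of_lt (div_pos one_pos (hD1 t))) (le_of_lt (div_pos hL0 (hD2 t)))
      have hnn : 0 ≤ auxG α ν c s m L t := by
        unfold auxG
        exact mul_nonneg (mul_nonneg (Real.rpow_nonneg ht0 _) (Real.rpow_nonneg h1t _)) hsum0
      rw [Real.norm_eq_abs, abs_of_nonneg hnn]
      have hfin := mul_le_mul
        (mul_le_mul_of_nonneg_left hw1 (Real.rpow_nonneg ht0 (α - 1)))
        (add_le_add hb1 hb2) hsum0
        (mul_nonneg (Real.rpow_nonneg ht0 _) zero_le_one)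
      unfold auxG
      calc t ^ (α - 1) * (1 - t) ^ ν *
            (1 / ((t ^ α - c * m) ^ 2 + (m * s) ^ 2) + L / ((m * t ^ α - c) ^ 2 + s ^ 2))
          ≤ t ^ (α - 1) * 1 * (1 / (m * s) ^ 2 + 1 / s ^ 2) := hfin
        _ = t ^ (α - 1) * (1 / (m * s) ^ 2 + 1 / s ^ 2) := by rw [mul_one]
  have hGpos : 0 < ∫ t in (0:ℝ)..1, auxG α ν c s m L t := by
    apply intervalIntegral.intervalIntegral_pos_of_pos_on hintG _ zero_lt_one
    intro t ht
    unfold auxG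
    exact mul_pos (mul_pos (Real.rpow_pos_of_pos ht.1 _)
        (Real.rpow_pos_of_pos (by linarith [ht.2]) _))
      (add_pos (div_pos one_pos (hD1 t)) (div_pos hL0 (hD2 t)))
  refine ⟨hGpos, ?_⟩
  have hkey : 0 < ∫ t in (0:ℝ)..1,
      ((fun t : ℝ => t ^ (α - 1) / ((1 * t ^ α - c * m) ^ 2 + (m * s) ^ 2)) t
        + (fun t : ℝ => t ^ (α - 1) / ((m * t ^ α - c) ^ 2 + s ^ 2)) t
        - auxG α ν c s m L t) := by
    apply intervalIntegral.intervalIntegral_pos_of_pos_on ((hint1.add hint2).sub hintG) _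
      zero_lt_one
    intro t ht
    simp only [auxG, one_mul]
    have hw1 : (1 - t) ^ ν < 1 := Real.rpow_lt_one (by linarith [ht.2]) (by linarith [ht.1]) hν
    have hw0 : 0 ≤ (1 - t) ^ ν := Real.rpow_nonneg (by linarith [ht.2]) _
    have hwL : (1 - t) ^ ν * L < 1 := by nlinarith
    have key : t ^ (α - 1) / ((t ^ α - c * m) ^ 2 + (m * s) ^ 2)
        + t ^ (α - 1) / ((m * t ^ α - c) ^ 2 + s ^ 2)
        - t ^ (α - 1) * (1 - t) ^ ν *
            (1 / ((t ^ α - c * m) ^ 2 + (m * s) ^ 2) + L / ((m * t ^ α - c) ^ 2 + s ^ 2))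
        = t ^ (α - 1) * ((1 - (1 - t) ^ ν) / ((t ^ α - c * m) ^ 2 + (m * s) ^ 2)
            + (1 - (1 - t) ^ ν * L) / ((m * t ^ α - c) ^ 2 + s ^ 2)) := by
      field_simp
      ring
    rw [key]
    exact mul_pos (Real.rpow_pos_of_pos ht.1 _)
      (add_pos (div_pos (by linarith) (hD1 t)) (div_pos (by linarith) (hD2 t)))
  rw [intervalIntegral.integral_sub (hint1.add hint2) hintG,
    intervalIntegral.integral_add hint1 hint2] at hkey
  have e1 := auxR_ftc α 1 (c * m) (m * s) hα one_pos hms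
  have e2 := auxR_ftc α m c s hα hm hs
  rw [e1, e2] at hkey
  linarith

/-- The error term `R(α,n,λ)` in the optimal neo-classical identity. -/
noncomputable def Rerr (α : ℝ) (n : ℕ) (lam : ℝ) : ℝ :=
  α * lam ^ α * Real.sin (α * Real.pi) / Real.pi *
    ∫ t in (0:ℝ)..1, t ^ (α - 1) * (1 - t) ^ (α * n) *
      (1 / (t ^ (2 * α) - 2 * t ^ α * lam ^ α * Real.cos (α * Real.pi) + lam ^ (2 * α)) +
       lam ^ (α * n) /
         (1 - 2 * (lam * t) ^ α * Real.cos (α * Real.pi) + (lam * t) ^ (2 * α)))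

/-- Bound on the error term for `0 < α < 1`. -/
theorem Rerr_bound (α : ℝ) (hα0 : 0 < α) (hα1 : α < 1)
    (n : ℕ) (hn : 1 ≤ n) (lam : ℝ) (hl0 : 0 < lam) (hl1 : lam ≤ 1) :
    0 < Rerr α n lam ∧ Rerr α n lam < 1 - α ∧ (1 - α : ℝ) < 1 := by
  have hπ := Real.pi_pos
  have hs : 0 < Real.sin (α * Real.pi) :=
    Real.sin_pos_of_pos_of_lt_pi (by positivity) (by nlinarith)
  have hm : 0 < lam ^ α := Real.rpow_pos_of_pos hl0 α
  have hm1 : lam ^ α ≤ 1 := Real.rpow_le_one hl0.le hl1 hα0.le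
  have hn0 : (0:ℝ) < (n:ℝ) := by exact_mod_cast hn
  have hν : 0 < α * (n : ℝ) := by positivity
  have hL0 : 0 < lam ^ (α * (n:ℝ)) := Real.rpow_pos_of_pos hl0 _
  have hL1 : lam ^ (α * (n:ℝ)) ≤ 1 := Real.rpow_le_one hl0.le hl1 hν.le
  obtain ⟨hpos, hlt⟩ := auxR_lt α (α * (n:ℝ)) (Real.cos (α*Real.pi)) (Real.sin (α*Real.pi))
    (lam ^ α) (lam ^ (α * (n:ℝ))) hα0 hν hs hm hL0 hL1
  have hpyth : Real.sin (α*Real.pi) ^ 2 + Real.cos (α*Real.pi) ^ 2 = 1 :=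
    Real.sin_sq_add_cos_sq _
  have hcong : (∫ t in (0:ℝ)..1, t ^ (α - 1) * (1 - t) ^ (α * (n:ℝ)) *
      (1 / (t ^ (2 * α) - 2 * t ^ α * lam ^ α * Real.cos (α * Real.pi) + lam ^ (2 * α)) +
        lam ^ (α * (n:ℝ)) /
          (1 - 2 * (lam * t) ^ α * Real.cos (α * Real.pi) + (lam * t) ^ (2 * α))))
      = ∫ t in (0:ℝ)..1, auxG α (α * (n:ℝ)) (Real.cos (α*Real.pi)) (Real.sin (α*Real.pi))
          (lam ^ α) (lam ^ (α * (n:ℝ))) t := by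
    apply intervalIntegral.integral_congr
    intro t ht
    rw [Set.uIcc_of_le zero_le_one] at ht
    have ht0 : (0:ℝ) ≤ t := ht.1
    have h2a : ∀ x : ℝ, 0 ≤ x → x ^ (2 * α) = (x ^ α) ^ 2 := fun x hx => by
      rw [mul_comm, Real.rpow_mul hx, Real.rpow_two]
    simp only [auxG]
    rw [h2a t ht0, h2a lam hl0.le, h2a (lam * t) (by positivity), Real.mul_rpow hl0.le ht0]
    have hden1 : (t ^ α) ^ 2 - 2 * t ^ α * lam ^ α * Real.cos (α*Real.pi) + (lam ^ α) ^ 2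
        = (t ^ α - Real.cos (α*Real.pi) * lam ^ α) ^ 2
          + (lam ^ α * Real.sin (α*Real.pi)) ^ 2 := by
      linear_combination (-((lam ^ α) ^ 2)) * hpyth
    have hden2 : 1 - 2 * (lam ^ α * t ^ α) * Real.cos (α*Real.pi) + (lam ^ α * t ^ α) ^ 2
        = (lam ^ α * t ^ α - Real.cos (α*Real.pi)) ^ 2 + Real.sin (α*Real.pi) ^ 2 := by
      linear_combination (-1 : ℝ) * hpyth
    rw [hden1, hden2]
  refine ⟨?_, ?_, by linarith⟩
  · unfold Rerr
    rw [hcong]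
    exact mul_pos (by positivity) hpos
  · unfold Rerr
    rw [hcong]
    have hpre : 0 < α * lam ^ α * Real.sin (α*Real.pi) / Real.pi := by positivity
    have h2 := mul_lt_mul_of_pos_left hlt hpre
    refine lt_of_lt_of_le h2 (le_of_eq ?_)
    have harg : -(Real.cos (α*Real.pi) * lam ^ α) / (lam ^ α * Real.sin (α*Real.pi))
        = -Real.cos (α*Real.pi) / Real.sin (α*Real.pi) := by
      rw [mul_comm (Real.cos (α*Real.pi)) (lam ^ α), neg_div, neg_div,
        mul_div_mul_left _ _ hm.ne']
    rw [harg]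
    have hid := auxR_arctan (α * Real.pi) (lam ^ α) (by positivity) (by nlinarith) hm hm1
    field_simp
    rw [neg_div, mul_comm (Real.cos (α * Real.pi)) (lam ^ α)] at hid
    linear_combination hid
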